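/- Let p be a prime, n ≥ 1, and let Σ ≤ GL₂(ℤ/pⁿℤ) be a group acting on M = (ℤ/pⁿℤ)² with a normal commutator subgroup Σ′ such that Σ′ is cyclic, and suppose Σ contains a central-in-quotient element whose induced map x ↦ αx − x is an automorphism of M^{Σ′}. Then H¹_loc(Σ, M) = 0, where H¹_loc is the intersection of the kernels of the restriction maps H¹(Σ, M) → H¹(C, M) over all cyclic subgroups C of Σ. -/

import Mathlib

/-- If `Σ ≤ GL₂(ℤ/pⁿℤ)` has cyclic commutator subgroup `Σ′` and contains an element `α`
such that `x ↦ αx - x` is an automorphism of the fixed points `M^{Σ′}`, then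
`H¹_loc(Σ, M) = 0`: every cocycle satisfying the local conditions is a coboundary. -/
theorem stmt_9 (p : ℕ) (hp : p.Prime) (n : ℕ) (hn : 1 ≤ n)
    (S : Subgroup (GL (Fin 2) (ZMod (p ^ n))))
    (hcyc : IsCyclic ↥(⁅S, S⁆ : Subgroup (GL (Fin 2) (ZMod (p ^ n)))))
    (F : Set (Fin 2 → ZMod (p ^ n)))
    (hF : F = {x | ∀ h ∈ (⁅S, S⁆ : Subgroup (GL (Fin 2) (ZMod (p ^ n)))),
      (h : Matrix (Fin 2) (Fin 2) (ZMod (p ^ n))).mulVec x = x})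
    (α : GL (Fin 2) (ZMod (p ^ n))) (hαS : α ∈ S)
    (hbij : Set.BijOn
      (fun x : Fin 2 → ZMod (p ^ n) =>
        (α : Matrix (Fin 2) (Fin 2) (ZMod (p ^ n))).mulVec x - x) F F)
    (Z : GL (Fin 2) (ZMod (p ^ n)) → (Fin 2 → ZMod (p ^ n)))
    (hZ : ∀ σ ∈ S, ∀ τ ∈ S, Z (σ * τ) = Z σ +
      (σ : Matrix (Fin 2) (Fin 2) (ZMod (p ^ n))).mulVec (Z τ))
    (hloc : ∀ σ ∈ S, ∃ W : Fin 2 → ZMod (p ^ n),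
      Z σ = (σ : Matrix (Fin 2) (Fin 2) (ZMod (p ^ n))).mulVec W - W) :
    ∃ P : Fin 2 → ZMod (p ^ n), ∀ σ ∈ S,
      Z σ = (σ : Matrix (Fin 2) (Fin 2) (ZMod (p ^ n))).mulVec P - P := by
  haveI : NeZero (p ^ n) := ⟨pow_ne_zero _ hp.ne_zero⟩
  set S' : Subgroup (GL (Fin 2) (ZMod (p ^ n))) := ⁅S, S⁆ with hS'
  have hle : S' ≤ S := Subgroup.commutator_le.mpr fun a ha b hb =>
    S.mul_mem (S.mul_mem (S.mul_mem ha hb) (S.inv_mem ha)) (S.inv_mem hb)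
  have hconj : ∀ σ ∈ S, ∀ h ∈ S', σ * h * σ⁻¹ ∈ S' := by
    intro σ hσ h hh
    have hmap : Subgroup.map (MulAut.conj σ).toMonoidHom S ≤ S := by
      rintro x ⟨y, hy, rfl⟩
      exact S.mul_mem (S.mul_mem hσ hy) (S.inv_mem hσ)
    have := (Subgroup.commutator_mono hmap hmap)
      (Subgroup.map_commutator S S (MulAut.conj σ).toMonoidHom ▸
        Subgroup.mem_map_of_mem _ hh)
    simpa [MulAut.conj, mul_assoc] using this
  have hZ1 : Z 1 = 0 := by
    have h := hZ 1 S.one_mem 1 S.one_mem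
    simp only [mul_one, Units.val_one, Matrix.one_mulVec] at h
    exact (left_eq_add.mp h)
  obtain ⟨g, hg⟩ := hcyc.exists_generator
  obtain ⟨W, hW⟩ := hloc g.val (hle g.2)
  set Z' : GL (Fin 2) (ZMod (p ^ n)) → (Fin 2 → ZMod (p ^ n)) :=
    fun σ => Z σ - ((σ : Matrix (Fin 2) (Fin 2) (ZMod (p ^ n))).mulVec W - W) with hZ'def
  have hZ'coc : ∀ σ ∈ S, ∀ τ ∈ S, Z' (σ * τ) = Z' σ +
      (σ : Matrix (Fin 2) (Fin 2) (ZMod (p ^ n))).mulVec (Z' τ) := by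
    intro σ hσ τ hτ
    simp only [hZ'def, hZ σ hσ τ hτ, Units.val_mul, ← Matrix.mulVec_mulVec,
      Matrix.mulVec_sub, Matrix.mulVec_add]
    abel
  have hZ'1 : Z' 1 = 0 := by
    simp only [hZ'def, hZ1, Units.val_one, Matrix.one_mulVec, sub_self]
  have hZ'g : Z' g.val = 0 := by
    simp [hZ'def, hW]
  have hZ'S' : ∀ h ∈ S', Z' h = 0 := by
    intro h hh
    have hx : (⟨h, hh⟩ : ↥S') ∈ Submonoid.powers g :=
      mem_powers_iff_mem_zpowers.mpr (hg ⟨h, hh⟩)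
    obtain ⟨k, hk⟩ := hx
    have hpow : ∀ k : ℕ, Z' ((g : GL (Fin 2) (ZMod (p ^ n))) ^ k) = 0 := by
      intro k
      induction k with
      | zero => simpa using hZ'1
      | succ m ih =>
        have hm : (g : GL (Fin 2) (ZMod (p ^ n))) ^ m ∈ S := hle (S'.pow_mem g.2 m)
        have := hZ'coc _ hm _ (hle g.2)
        rw [← pow_succ] at this
        simp [this, ih, hZ'g]
    have hval : ((g ^ k : ↥S') : GL (Fin 2) (ZMod (p ^ n))) = h := congrArg Subtype.val hk
    rw [← hval]
    simpa using hpow k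
  have hfix : ∀ σ ∈ S, ∀ h ∈ S',
      (h : Matrix (Fin 2) (Fin 2) (ZMod (p ^ n))).mulVec (Z' σ) = Z' σ := by
    intro σ hσ h hh
    have h1 := hZ'coc h (hle hh) σ hσ
    rw [hZ'S' h hh, zero_add] at h1
    have hh' : σ⁻¹ * h * σ ∈ S' := by
      simpa using hconj σ⁻¹ (S.inv_mem hσ) h hh
    have h2 := hZ'coc σ hσ _ (hle hh')
    rw [hZ'S' _ hh', Matrix.mulVec_zero, add_zero] at h2
    have he : σ * (σ⁻¹ * h * σ) = h * σ := by group
    rw [he] at h2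
    rw [← h1, h2]
  have hmemF : ∀ σ ∈ S, Z' σ ∈ F := by
    intro σ hσ
    rw [hF]
    exact fun h hh => hfix σ hσ h hh
  obtain ⟨P, hPF, hP⟩ := hbij.surjOn (hmemF α hαS)
  simp only at hP
  have hPfix : ∀ h ∈ S', (h : Matrix (Fin 2) (Fin 2) (ZMod (p ^ n))).mulVec P = P := by
    rw [hF] at hPF; exact hPF
  have key : ∀ σ ∈ S, Z' σ =
      (σ : Matrix (Fin 2) (Fin 2) (ZMod (p ^ n))).mulVec P - P := by
    intro σ hσ
    set Q := (σ : Matrix (Fin 2) (Fin 2) (ZMod (p ^ n))).mulVec P - P with hQ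
    have hQF : Q ∈ F := by
      rw [hF]
      intro h hh
      have hh' : σ⁻¹ * h * σ ∈ S' := by
        simpa using hconj σ⁻¹ (S.inv_mem hσ) h hh
      have he : (h : GL (Fin 2) (ZMod (p ^ n))) * σ = σ * (σ⁻¹ * h * σ) := by group
      have : ((h : GL (Fin 2) (ZMod (p ^ n))).val * (σ : GL (Fin 2) (ZMod (p ^ n))).val).mulVec P = (σ : GL (Fin 2) (ZMod (p ^ n))).val.mulVec P := by
        rw [← Units.val_mul, he, Units.val_mul, ← Matrix.mulVec_mulVec, hPfix _ hh']
      simp only [hQ, Matrix.mulVec_sub, Matrix.mulVec_mulVec, this, hPfix h hh]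
    have hc : α⁻¹ * σ⁻¹ * α * σ ∈ S' := by
      have : α⁻¹ * σ⁻¹ * α⁻¹⁻¹ * σ⁻¹⁻¹ ∈ S' :=
        Subgroup.commutator_mem_commutator (S.inv_mem hαS) (S.inv_mem hσ)
      simpa [commutatorElement_def, mul_assoc] using this
    have hceq : (α : GL (Fin 2) (ZMod (p ^ n))) * σ = (σ * α) * (α⁻¹ * σ⁻¹ * α * σ) := by group
    have e1 := hZ'coc α hαS σ hσ
    have e2 := hZ'coc (σ * α) (S.mul_mem hσ hαS) _ (hle hc)
    rw [← hceq] at e2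
    have e3 := hZ'coc σ hσ α hαS
    rw [hZ'S' _ hc, Matrix.mulVec_zero, add_zero] at e2
    have star : Z' α + (α : Matrix (Fin 2) (Fin 2) (ZMod (p ^ n))).mulVec (Z' σ)
        = Z' σ + (σ : Matrix (Fin 2) (Fin 2) (ZMod (p ^ n))).mulVec (Z' α) := by
      rw [← e1, e2, e3]
    have hcomm : ((α : GL (Fin 2) (ZMod (p ^ n))).val * (σ : GL (Fin 2) (ZMod (p ^ n))).val).mulVec P = ((σ : GL (Fin 2) (ZMod (p ^ n))).val * (α : GL (Fin 2) (ZMod (p ^ n))).val).mulVec P := by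
      rw [← Units.val_mul, hceq, Units.val_mul, ← Matrix.mulVec_mulVec, hPfix _ hc,
        Units.val_mul]
    have hZα : Z' α = (α : Matrix (Fin 2) (Fin 2) (ZMod (p ^ n))).mulVec P - P := hP.symm
    have hs : (σ : Matrix (Fin 2) (Fin 2) (ZMod (p ^ n))).mulVec (Z' α)
        = ((σ : GL (Fin 2) (ZMod (p ^ n))).val * (α : GL (Fin 2) (ZMod (p ^ n))).val).mulVec P
          - (σ : Matrix (Fin 2) (Fin 2) (ZMod (p ^ n))).mulVec P := by
      rw [hZα, Matrix.mulVec_sub, Matrix.mulVec_mulVec]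
    have hQeq : (α : Matrix (Fin 2) (Fin 2) (ZMod (p ^ n))).mulVec Q - Q
        = (α : Matrix (Fin 2) (Fin 2) (ZMod (p ^ n))).mulVec (Z' σ) - Z' σ := by
      rw [hQ, Matrix.mulVec_sub, Matrix.mulVec_mulVec, hcomm]
      linear_combination -star - hs + hZα
    exact (hbij.injOn hQF (hmemF σ hσ) hQeq).symm
  refine ⟨P + W, fun σ hσ => ?_⟩
  have hk := key σ hσ
  simp only [hZ'def] at hk
  rw [Matrix.mulVec_add]
  linear_combination hk
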